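/- Combining the decoupling MGF bound with the kernel MGF bound: if E exp(λη) ≤ exp(l*(C₂λ)) for all λ ∈ ℝ and E exp(λU_n) ≤ (E exp(λη/k))^k with k = ⌊n/m⌋ ≥ n/(2m), then there exists a constant C₃(m) ∈ (0,∞) such that E exp(μ √n U_n) ≤ exp(n · l*(μ C₃(m)/√n)) for all μ ∈ ℝ. -/

import Mathlib

open MeasureTheory ProbabilityTheory Real Set Filter

/-- Young–Fenchel transform `l*(λ) = sup_{t ≥ 0} (|λ| t − l t)`. -/
noncomputable def youngFenchel (l : ℝ → ℝ) (lam : ℝ) : ℝ :=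
  ⨆ t : {t : ℝ // 0 ≤ t}, (|lam| * t.1 - l t.1)

lemma youngFenchel_nonneg (l : ℝ → ℝ) (hl0 : l 0 = 0) (c : ℝ) :
    0 ≤ youngFenchel l c := by
  unfold youngFenchel
  by_cases hb : BddAbove (Set.range fun t : {t : ℝ // 0 ≤ t} => (|c| * t.1 - l t.1))
  · have := le_ciSup hb (⟨0, le_refl 0⟩ : {t : ℝ // 0 ≤ t})
    simpa [hl0] using this
  · rw [Real.iSup_of_not_bddAbove hb]

/-- Combining the decoupling MGF bound `E exp(λ U_n) ≤ (E exp(λη/k))^k`, `k = ⌊n/m⌋ ≥ n/(2m)`,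
with the kernel MGF bound `E exp(λη) ≤ exp(l*(C₂λ))` yields a constant `C₃(m) ∈ (0,∞)` with
`E exp(μ √n U_n) ≤ exp(n l*(μ C₃(m)/√n))` for all `μ ∈ ℝ`. -/
theorem mgf_Ustat_combined
    {Ω : Type*} [MeasurableSpace Ω] (μ : Measure Ω) [IsProbabilityMeasure μ]
    (l : ℝ → ℝ) (hconv : ConvexOn ℝ (Set.Ici (0 : ℝ)) l)
    (hnonneg : ∀ t : ℝ, 0 ≤ t → 0 ≤ l t) (hl0 : l 0 = 0)
    (n m : ℕ) (hm : 0 < m) (hmn : m ≤ n)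
    (hk : (n : ℝ) / (2 * m) ≤ (n / m : ℕ))
    (Un η : Ω → ℝ) (hUmeas : Measurable Un) (hηmeas : Measurable η)
    (C₂ : ℝ) (hC₂ : 0 < C₂)
    (hexpint : ∀ lam : ℝ, Integrable (fun ω => Real.exp (lam * η ω)) μ)
    (hmgfη : ∀ lam : ℝ,
      (∫ ω, Real.exp (lam * η ω) ∂μ) ≤ Real.exp (youngFenchel l (C₂ * lam)))
    (hdecouple : ∀ lam : ℝ,
      (∫ ω, Real.exp (lam * Un ω) ∂μ)
        ≤ (∫ ω, Real.exp (lam * η ω / (n / m : ℕ)) ∂μ) ^ (n / m : ℕ)) :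
    ∃ C₃ : ℝ, 0 < C₃ ∧
      ∀ μ' : ℝ,
        (∫ ω, Real.exp (μ' * Real.sqrt n * Un ω) ∂μ)
          ≤ Real.exp ((n : ℝ) * youngFenchel l (μ' * C₃ / Real.sqrt n)) := by
  set k : ℕ := n / m with hkdef
  have hk1 : 1 ≤ k := (Nat.one_le_div_iff hm).mpr hmn
  have hn0 : 0 < n := hm.trans_le hmn
  have hnpos : (0 : ℝ) < n := by exact_mod_cast hn0
  have hkpos : (0 : ℝ) < k := by exact_mod_cast hk1
  have hkn : (k : ℝ) ≤ n := by
    exact_mod_cast Nat.div_le_self n m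
  have hs : Real.sqrt n ≠ 0 := by positivity
  have h2 : Real.sqrt n * Real.sqrt n = (n : ℝ) := Real.mul_self_sqrt hnpos.le
  refine ⟨C₂ * n / k, by positivity, ?_⟩
  intro μ'
  have harg : μ' * (C₂ * n / k) / Real.sqrt n = C₂ * (μ' * Real.sqrt n / k) := by
    field_simp
    linear_combination (-μ') * h2
  have hYF := youngFenchel_nonneg l hl0 (C₂ * (μ' * Real.sqrt n / k))
  calc (∫ ω, Real.exp (μ' * Real.sqrt n * Un ω) ∂μ)
      ≤ (∫ ω, Real.exp (μ' * Real.sqrt n * η ω / k) ∂μ) ^ k := hdecouple (μ' * Real.sqrt n)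
    _ = (∫ ω, Real.exp ((μ' * Real.sqrt n / k) * η ω) ∂μ) ^ k := by
        congr 1
        apply integral_congr_ae
        filter_upwards with ω
        ring_nf
    _ ≤ (Real.exp (youngFenchel l (C₂ * (μ' * Real.sqrt n / k)))) ^ k := by
        apply pow_le_pow_left₀ _ (hmgfη (μ' * Real.sqrt n / k)) k
        exact integral_nonneg fun ω => (Real.exp_pos _).le
    _ = Real.exp ((k : ℝ) * youngFenchel l (C₂ * (μ' * Real.sqrt n / k))) := by
        rw [← Real.exp_nat_mul]
    _ ≤ Real.exp ((n : ℝ) * youngFenchel l (C₂ * (μ' * Real.sqrt n / k))) := by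
        apply Real.exp_le_exp.mpr
        exact mul_le_mul_of_nonneg_right hkn hYF
    _ = Real.exp ((n : ℝ) * youngFenchel l (μ' * (C₂ * n / k) / Real.sqrt n)) := by
        rw [harg]
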